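/- For every integer n ≥ 0, ∑_{k=2}^{n+2} S^{(2)}_{n+2,k} · φ(k) = ∑_{k=0}^{n} p(n-k) = p(0) + p(1) + ⋯ + p(n), where φ is Euler's totient function. -/

import Mathlib

open Finset

/-- The number of partitions of `n`. -/
def p (n : ℕ) : ℕ := Fintype.card (Nat.Partition n)

/-- The partition function extended by zero to negative integer arguments. -/
def pz (m : ℤ) : ℤ := if 0 ≤ m then (p m.toNat : ℤ) else 0

/-- partitions with all parts ≥ 2 -/
def q (m : ℕ) : ℕ :=
  ((Finset.univ : Finset (Nat.Partition m)).filter (fun P => ∀ i ∈ P.parts, 2 ≤ i)).card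

lemma filter_not_two_le (s : Multiset ℕ) (hpos : ∀ i ∈ s, 0 < i) :
    s.filter (fun i => ¬ 2 ≤ i) = Multiset.replicate (Multiset.card (s.filter (fun i => ¬ 2 ≤ i))) 1 := by
  rw [Multiset.eq_replicate]
  refine ⟨rfl, fun b hb => ?_⟩
  rw [Multiset.mem_filter] at hb
  have := hpos b hb.1
  omega

lemma sum_filter_two_le_le (s : Multiset ℕ) :
    (s.filter (fun i => 2 ≤ i)).sum ≤ s.sum := by
  conv_rhs => rw [← Multiset.filter_add_not (fun i => 2 ≤ i) s]
  rw [Multiset.sum_add]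
  exact Nat.le_add_right _ _

lemma lemA (t : ℕ) : p t = ∑ m ∈ Finset.range (t + 1), q m := by
  classical
  rw [p, ← Finset.card_univ]
  rw [Finset.card_eq_sum_card_fiberwise
    (f := fun P : Nat.Partition t => (P.parts.filter (fun i => 2 ≤ i)).sum)
    (t := Finset.range (t + 1)) ?hmem]
  case hmem =>
    intro P _
    rw [Finset.mem_coe, Finset.mem_range, Nat.lt_succ_iff]
    calc (Multiset.filter (fun i => 2 ≤ i) P.parts).sum ≤ P.parts.sum :=
          sum_filter_two_le_le _
      _ = t := P.parts_sum
  refine Finset.sum_congr rfl fun m hm => ?_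
  rw [Finset.mem_range, Nat.lt_succ_iff] at hm
  rw [q]
  refine Finset.card_bij'
    (fun P hP => ⟨P.parts.filter (fun i => 2 ≤ i), ?_, ?_⟩)
    (fun Q hQ => ⟨Q.parts + Multiset.replicate (t - m) 1, ?_, ?_⟩)
    ?_ ?_ ?_ ?_
  · intro i hi
    exact P.parts_pos (Multiset.mem_of_mem_filter hi)
  · simpa using (Finset.mem_filter.mp hP).2
  · intro i hi
    rcases Multiset.mem_add.mp hi with h | h
    · exact Q.parts_pos h
    · rw [Multiset.eq_of_mem_replicate h]; norm_num
  · rw [Multiset.sum_add, Q.parts_sum, Multiset.sum_replicate, smul_eq_mul, mul_one]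
    omega
  · -- forward lands in target
    intro P hP
    simp only [Finset.mem_filter, Finset.mem_univ, true_and]
    intro i hi
    exact (Multiset.mem_filter.mp hi).2
  · -- backward lands in source
    intro Q hQ
    simp only [Finset.mem_filter, Finset.mem_univ, true_and] at hQ ⊢
    have h2 : ∀ i ∈ Q.parts, 2 ≤ i := hQ
    have : Multiset.filter (fun i => 2 ≤ i) (Q.parts + Multiset.replicate (t - m) 1)
        = Q.parts := by
      rw [Multiset.filter_add, Multiset.filter_eq_self.mpr h2,
        Multiset.filter_eq_nil.mpr ?_, add_zero]
      intro a ha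
      rw [Multiset.eq_of_mem_replicate ha]
      norm_num
    simp only [this, Q.parts_sum]
  · -- left inverse
    intro P hP
    ext1
    simp only
    have hsplit := Multiset.filter_add_not (fun i => 2 ≤ i) P.parts
    have hrep := filter_not_two_le P.parts (fun i hi => P.parts_pos hi)
    have hcard : Multiset.card (P.parts.filter (fun i => ¬ 2 ≤ i)) = t - m := by
      have hsum : (P.parts.filter (fun i => 2 ≤ i)).sum
          + (P.parts.filter (fun i => ¬ 2 ≤ i)).sum = t := by
        rw [← Multiset.sum_add, hsplit, P.parts_sum]
      have hm' : (P.parts.filter (fun i => 2 ≤ i)).sum = m :=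
        (Finset.mem_filter.mp hP).2
      have : (P.parts.filter (fun i => ¬ 2 ≤ i)).sum
          = Multiset.card (P.parts.filter (fun i => ¬ 2 ≤ i)) := by
        conv_lhs => rw [hrep]
        rw [Multiset.sum_replicate, smul_eq_mul, mul_one]
      omega
    conv_rhs => rw [← hsplit]
    rw [hrep, hcard]
  · -- right inverse
    intro Q hQ
    ext1
    simp only
    simp only [Finset.mem_filter, Finset.mem_univ, true_and] at hQ
    rw [Multiset.filter_add, Multiset.filter_eq_self.mpr hQ,
      Multiset.filter_eq_nil.mpr ?_, add_zero]
    intro a ha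
    rw [Multiset.eq_of_mem_replicate ha]
    norm_num

/-- `S r n k` : the total number of parts equal to `k` in all partitions of `n`
whose parts are all at least `r`. -/
def S (r n k : ℕ) : ℕ :=
  ∑ P : Nat.Partition n, if ∀ i ∈ P.parts, r ≤ i then P.parts.count k else 0

lemma multiset_sum_le {s t : Multiset ℕ} (h : s ≤ t) : s.sum ≤ t.sum := by
  obtain ⟨u, rfl⟩ := Multiset.le_iff_exists_add.mp h
  simp

lemma count_le_div (N k : ℕ) (hk : 0 < k) (P : Nat.Partition N) :
    P.parts.count k ≤ N / k := by
  have h := multiset_sum_le ((Multiset.le_count_iff_replicate_le).mp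
    (le_refl (P.parts.count k)))
  rw [Multiset.sum_replicate, smul_eq_mul, P.parts_sum] at h
  exact (Nat.le_div_iff_mul_le hk).mpr h

lemma lemB (N k : ℕ) (hk : 2 ≤ k) :
    S 2 N k = ∑ j ∈ Finset.Icc 1 (N / k), q (N - j * k) := by
  classical
  have hk0 : 0 < k := by omega
  rw [S, ← Finset.sum_filter]
  have hcount : ∀ P ∈ (Finset.univ.filter fun P : Nat.Partition N => ∀ i ∈ P.parts, 2 ≤ i),
      P.parts.count k = ∑ j ∈ Finset.Icc 1 (N / k), if j ≤ P.parts.count k then 1 else 0 := by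
    intro P _
    rw [← Finset.sum_filter]
    have : (Finset.Icc 1 (N / k)).filter (fun j => j ≤ P.parts.count k)
        = Finset.Icc 1 (P.parts.count k) := by
      ext j
      simp only [Finset.mem_filter, Finset.mem_Icc]
      have := count_le_div N k hk0 P
      omega
    rw [this]
    simp [Nat.card_Icc]
  rw [Finset.sum_congr rfl hcount, Finset.sum_comm]
  refine Finset.sum_congr rfl fun j hj => ?_
  rw [Finset.mem_Icc] at hj
  have hjk : j * k ≤ N := (Nat.le_div_iff_mul_le hk0).mp hj.2
  rw [← Finset.sum_filter, Finset.sum_const, smul_eq_mul, mul_one, Finset.filter_filter, q]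
  refine Finset.card_bij'
    (fun P hP => ⟨P.parts - Multiset.replicate j k, ?_, ?_⟩)
    (fun Q hQ => ⟨Q.parts + Multiset.replicate j k, ?_, ?_⟩)
    ?_ ?_ ?_ ?_
  · intro i hi
    exact P.parts_pos (Multiset.mem_of_le (Multiset.sub_le_self _ _) hi)
  · have hrep : Multiset.replicate j k ≤ P.parts := by
      rw [Finset.mem_filter] at hP
      exact Multiset.le_count_iff_replicate_le.mp hP.2.2
    have h1 := tsub_add_cancel_of_le hrep
    have h2 : (P.parts - Multiset.replicate j k).sum + j * k = N := by
      conv_rhs => rw [← P.parts_sum, ← h1]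
      rw [Multiset.sum_add, Multiset.sum_replicate, smul_eq_mul]
    omega
  · intro i hi
    rcases Multiset.mem_add.mp hi with h | h
    · exact Q.parts_pos h
    · rw [Multiset.eq_of_mem_replicate h]; omega
  · rw [Multiset.sum_add, Q.parts_sum, Multiset.sum_replicate, smul_eq_mul]
    omega
  · -- forward membership
    intro P hP
    rw [Finset.mem_filter] at hP ⊢
    refine ⟨Finset.mem_univ _, fun i hi => ?_⟩
    exact hP.2.1 i (Multiset.mem_of_le (Multiset.sub_le_self _ _) hi)
  · -- backward membership
    intro Q hQ
    rw [Finset.mem_filter] at hQ ⊢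
    refine ⟨Finset.mem_univ _, fun i hi => ?_, ?_⟩
    · rcases Multiset.mem_add.mp hi with h | h
      · exact hQ.2 i h
      · rw [Multiset.eq_of_mem_replicate h]; exact hk
    · simp [Multiset.count_add, Multiset.count_replicate_self]
  · intro P hP
    ext1
    simp only
    have hrep : Multiset.replicate j k ≤ P.parts := by
      rw [Finset.mem_filter] at hP
      exact Multiset.le_count_iff_replicate_le.mp hP.2.2
    exact tsub_add_cancel_of_le hrep
  · intro Q hQ
    ext1
    simp

lemma lemC (M : ℕ) (hM : 1 ≤ M) :
    ∑ d ∈ M.divisors.filter (fun d => 2 ≤ d), Nat.totient d = M - 1 := by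
  have h := Nat.sum_totient M
  rw [← Finset.sum_filter_add_sum_filter_not M.divisors (fun d => 2 ≤ d)] at h
  have h1 : M.divisors.filter (fun d => ¬ 2 ≤ d) = {1} := by
    ext d
    simp only [Finset.mem_filter, Nat.mem_divisors, Finset.mem_singleton]
    constructor
    · rintro ⟨⟨hd, hM0⟩, h2⟩
      have : d ≠ 0 := by rintro rfl; exact hM0 (Nat.eq_zero_of_zero_dvd hd)
      omega
    · rintro rfl
      exact ⟨⟨one_dvd _, by omega⟩, by omega⟩
  rw [h1] at h
  simp only [Finset.sum_singleton, Nat.totient_one] at h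
  omega

lemma lemD (n : ℕ) :
    ∑ m ∈ Finset.range (n + 1), q m * (n + 1 - m)
      = ∑ k ∈ Finset.range (n + 1), p (n - k) := by
  have hr : ∑ k ∈ Finset.range (n + 1), p (n - k) = ∑ t ∈ Finset.range (n + 1), p t := by
    have := Finset.sum_range_reflect (fun j => p j) (n + 1)
    simpa using this
  rw [hr]
  have hA : ∀ t ∈ Finset.range (n + 1), p t = ∑ m ∈ Finset.range (n + 1),
      if m ≤ t then q m else 0 := by
    intro t ht
    rw [Finset.mem_range] at ht
    rw [lemA, ← Finset.sum_filter]
    congr 1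
    ext m
    simp only [Finset.mem_filter, Finset.mem_range]
    omega
  rw [Finset.sum_congr rfl hA, Finset.sum_comm]
  refine Finset.sum_congr rfl fun m hm => ?_
  rw [Finset.mem_range] at hm
  rw [← Finset.sum_filter, Finset.sum_const, smul_eq_mul, mul_comm]
  congr 1
  have : (Finset.range (n + 1)).filter (fun t => m ≤ t) = Finset.Icc m n := by
    ext t
    simp only [Finset.mem_filter, Finset.mem_range, Finset.mem_Icc]
    omega
  rw [this, Nat.card_Icc]

theorem sum_S2_totient_eq_sum_partitions (n : ℕ) :
    ∑ k ∈ Finset.Icc 2 (n + 2), S 2 (n + 2) k * Nat.totient k =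
      ∑ k ∈ Finset.range (n + 1), p (n - k) := by
  classical
  set N := n + 2 with hN
  have step1 : ∑ k ∈ Finset.Icc 2 N, S 2 N k * Nat.totient k
      = ∑ k ∈ Finset.Icc 2 N, ∑ j ∈ Finset.Icc 1 N,
          if j * k ≤ N then q (N - j * k) * Nat.totient k else 0 := by
    refine Finset.sum_congr rfl fun k hk => ?_
    rw [Finset.mem_Icc] at hk
    rw [lemB N k hk.1, Finset.sum_mul]
    rw [← Finset.sum_filter]
    congr 1
    ext j
    simp only [Finset.mem_filter, Finset.mem_Icc]
    have hk0 : 0 < k := by omega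
    rw [Nat.le_div_iff_mul_le hk0]
    constructor
    · rintro ⟨h1, h2⟩
      refine ⟨⟨h1, ?_⟩, by omega⟩
      calc j ≤ j * k := Nat.le_mul_of_pos_right _ hk0
        _ ≤ N := by omega
    · rintro ⟨⟨h1, _⟩, h2⟩
      exact ⟨h1, by omega⟩
  rw [step1]
  rw [← Finset.sum_product']
  rw [← Finset.sum_filter]
  have step2 : ∑ x ∈ (Finset.Icc 2 N ×ˢ Finset.Icc 1 N).filter (fun x => x.2 * x.1 ≤ N),
        q (N - x.2 * x.1) * Nat.totient x.1
      = ∑ y ∈ ((Finset.range (n + 1)) ×ˢ Finset.Icc 2 N).filter (fun y => y.2 ∣ N - y.1),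
        q y.1 * Nat.totient y.2 := by
    refine Finset.sum_nbij' (fun x => (N - x.2 * x.1, x.1)) (fun y => (y.2, (N - y.1) / y.2))
      ?_ ?_ ?_ ?_ ?_
    · rintro ⟨k, j⟩ hx
      simp only [Finset.mem_filter, Finset.mem_product, Finset.mem_Icc, Finset.mem_range] at hx ⊢
      obtain ⟨⟨⟨hk2, hkN⟩, ⟨hj1, hjN⟩⟩, hjk⟩ := hx
      have h2 : 2 ≤ j * k := by nlinarith
      refine ⟨⟨by omega, ⟨hk2, hkN⟩⟩, ?_⟩
      have : N - (N - j * k) = j * k := by omega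
      rw [this]
      exact dvd_mul_left k j
    · rintro ⟨m, d⟩ hy
      simp only [Finset.mem_filter, Finset.mem_product, Finset.mem_Icc, Finset.mem_range] at hy ⊢
      obtain ⟨⟨hm, ⟨hd2, hdN⟩⟩, hdvd⟩ := hy
      have hd0 : 0 < d := by omega
      have hNm : 2 ≤ N - m := by omega
      have hdle : d ≤ N - m := Nat.le_of_dvd (by omega) hdvd
      refine ⟨⟨⟨hd2, hdN⟩, ⟨?_, ?_⟩⟩, ?_⟩
      · exact Nat.one_le_div_iff hd0 |>.mpr hdle
      · calc (N - m) / d ≤ N / d := Nat.div_le_div_right (by omega)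
          _ ≤ N := Nat.div_le_self _ _
      · rw [Nat.div_mul_cancel hdvd]; omega
    · rintro ⟨k, j⟩ hx
      simp only [Finset.mem_filter, Finset.mem_product, Finset.mem_Icc] at hx
      obtain ⟨⟨⟨hk2, _⟩, ⟨hj1, _⟩⟩, hjk⟩ := hx
      have hk0 : 0 < k := by omega
      have : N - (N - j * k) = j * k := by omega
      simp only [this, Nat.mul_div_cancel _ hk0, Prod.mk.injEq]
    · rintro ⟨m, d⟩ hy
      simp only [Finset.mem_filter, Finset.mem_product, Finset.mem_Icc, Finset.mem_range] at hy
      obtain ⟨⟨hm, ⟨hd2, _⟩⟩, hdvd⟩ := hy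
      simp only [Prod.mk.injEq]
      rw [Nat.div_mul_cancel hdvd]
      refine ⟨by omega, by trivial⟩
    · rintro ⟨k, j⟩ hx
      rfl
  rw [step2]
  rw [Finset.sum_filter, Finset.sum_product]
  have step3 : ∀ m ∈ Finset.range (n + 1),
      (∑ d ∈ Finset.Icc 2 N, if d ∣ N - m then q m * Nat.totient d else 0)
        = q m * (n + 1 - m) := by
    intro m hm
    rw [Finset.mem_range] at hm
    rw [← Finset.sum_filter]
    have hNm : 2 ≤ N - m := by omega
    have hset : (Finset.Icc 2 N).filter (fun d => d ∣ N - m)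
        = (N - m).divisors.filter (fun d => 2 ≤ d) := by
      ext d
      simp only [Finset.mem_filter, Finset.mem_Icc, Nat.mem_divisors]
      constructor
      · rintro ⟨⟨h2, hN'⟩, hdvd⟩
        exact ⟨⟨hdvd, by omega⟩, h2⟩
      · rintro ⟨⟨hdvd, hne⟩, h2⟩
        have := Nat.le_of_dvd (by omega) hdvd
        exact ⟨⟨h2, by omega⟩, hdvd⟩
    rw [hset, ← Finset.mul_sum, lemC (N - m) (by omega)]
    congr 1
    omega
  rw [Finset.sum_congr rfl step3]
  exact lemD n
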